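/- Weak duality for the sparse UOT primal-dual pair: for any feasible γ ≥ 0 with all columns in B_{K} and any α ∈ ℝ^m, β ∈ ℝ^n, P(γ) ≥ D(α, β), where P(γ) = ⟨C, γ⟩ + Σ_j [(λ₂/2)‖γ_j‖²] + λ₁(‖γ1 - μ‖²_{G₁} + ‖γᵀ1 - ν‖²_{G₂}) and D(α,β) = ⟨α, μ⟩ + ⟨β, ν⟩ - (1/(4λ₁))αᵀG₁⁻¹α - (1/(4λ₁))βᵀG₂⁻¹β - Σ_j Θ*(α + β_j·1 - C_j), with Θ*(w) = max_{z∈B_K}⟨w,z⟩ - (λ₂/2)‖z‖² and ‖v‖²_G = vᵀGv for positive definite G. -/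

import Mathlib

open Matrix

/-- The K-sparse conjugate `Θ*(w) = max_{z ∈ B_K} ⟨w,z⟩ - (λ₂/2)‖z‖²`. -/
noncomputable def ThetaStar (m K : ℕ) (lam₂ : ℝ) (w : Fin m → ℝ) : ℝ :=
  sSup {y : ℝ | ∃ z : Fin m → ℝ, (∀ i, 0 ≤ z i) ∧
    (Finset.univ.filter (fun i => z i ≠ 0)).card ≤ K ∧
    y = (∑ i, w i * z i) - lam₂ / 2 * ∑ i, (z i) ^ 2}

lemma quad_bound {k : ℕ} {G : Matrix (Fin k) (Fin k) ℝ} (hG : G.PosDef)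
    {lam : ℝ} (hlam : 0 < lam) (p a : Fin k → ℝ) :
    a ⬝ᵥ p ≤ lam * (p ⬝ᵥ G.mulVec p) + 1/(4*lam) * (a ⬝ᵥ G⁻¹.mulVec a) := by
  have hinv : G * G⁻¹ = 1 := mul_nonsing_inv G (isUnit_iff_isUnit_det G |>.1 hG.isUnit)
  have hsym : Gᵀ = G := by
    ext i j
    have := congrFun (congrFun hG.isHermitian.eq i) j
    simpa [conjTranspose_apply] using this
  set c : ℝ := 1/(2*lam) with hc
  set u : Fin k → ℝ := G⁻¹.mulVec a with hu
  set v : Fin k → ℝ := p - c • u with hv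
  have h0 : (0:ℝ) ≤ v ⬝ᵥ G.mulVec v := by simpa using hG.posSemidef.dotProduct_mulVec_nonneg v
  have hGu : G.mulVec u = a := by
    rw [hu, mulVec_mulVec, hinv, one_mulVec]
  have huGp : u ⬝ᵥ G.mulVec p = a ⬝ᵥ p := by
    rw [dotProduct_mulVec, ← mulVec_transpose, hsym, hGu]
  have hpGu : p ⬝ᵥ G.mulVec u = a ⬝ᵥ p := by
    rw [hGu, dotProduct_comm]
  have huGu : u ⬝ᵥ G.mulVec u = a ⬝ᵥ G⁻¹.mulVec a := by
    rw [hGu, dotProduct_comm, hu]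
  have hexp : v ⬝ᵥ G.mulVec v
      = p ⬝ᵥ G.mulVec p - 2*c*(a ⬝ᵥ p) + c^2 * (a ⬝ᵥ G⁻¹.mulVec a) := by
    rw [hv, mulVec_sub, mulVec_smul, sub_dotProduct, dotProduct_sub, dotProduct_sub,
      dotProduct_smul, smul_dotProduct, smul_dotProduct, dotProduct_smul,
      huGp, hpGu, huGu]
    ring_nf
  have h1 : 0 ≤ lam * (p ⬝ᵥ G.mulVec p - 2*c*(a ⬝ᵥ p) + c^2 * (a ⬝ᵥ G⁻¹.mulVec a)) := by
    rw [← hexp]; exact mul_nonneg hlam.le h0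
  have h2 : lam * (p ⬝ᵥ G.mulVec p) - a ⬝ᵥ p + 1/(4*lam) * (a ⬝ᵥ G⁻¹.mulVec a)
      = lam * (p ⬝ᵥ G.mulVec p - 2*c*(a ⬝ᵥ p) + c^2 * (a ⬝ᵥ G⁻¹.mulVec a)) := by
    rw [hc]; field_simp; ring
  linarith

lemma theta_lb (m K : ℕ) {lam₂ : ℝ} (hlam₂ : 0 < lam₂) (w z : Fin m → ℝ)
    (hz : ∀ i, 0 ≤ z i) (hs : (Finset.univ.filter (fun i => z i ≠ 0)).card ≤ K) :
    (∑ i, w i * z i) - lam₂ / 2 * ∑ i, (z i) ^ 2 ≤ ThetaStar m K lam₂ w := by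
  apply le_csSup
  · refine ⟨∑ i, (w i)^2 / (2*lam₂), ?_⟩
    rintro y ⟨x, -, -, rfl⟩
    rw [Finset.mul_sum, ← Finset.sum_sub_distrib]
    refine Finset.sum_le_sum fun i _ => ?_
    rw [le_div_iff₀ (by positivity)]
    nlinarith [sq_nonneg (lam₂ * x i - w i)]
  · exact ⟨z, hz, hs, rfl⟩

/-- Weak duality for the sparse UOT primal-dual pair: for every feasible `γ`
(nonnegative with all columns `K`-sparse) and every `α, β`, `P(γ) ≥ D(α, β)`. -/
theorem stmt_17 (m n K : ℕ) (C : Matrix (Fin m) (Fin n) ℝ)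
    (μ : Fin m → ℝ) (ν : Fin n → ℝ)
    (G₁ : Matrix (Fin m) (Fin m) ℝ) (G₂ : Matrix (Fin n) (Fin n) ℝ)
    (hG₁ : G₁.PosDef) (hG₂ : G₂.PosDef)
    (lam₁ lam₂ : ℝ) (hlam₁ : 0 < lam₁) (hlam₂ : 0 < lam₂)
    (γ : Matrix (Fin m) (Fin n) ℝ) (hγpos : ∀ i j, 0 ≤ γ i j)
    (hγsparse : ∀ j : Fin n, (Finset.univ.filter (fun i => γ i j ≠ 0)).card ≤ K)
    (α : Fin m → ℝ) (β : Fin n → ℝ) :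
    (∑ i, ∑ j, C i j * γ i j) + (∑ j, lam₂ / 2 * ∑ i, (γ i j) ^ 2)
      + lam₁ * ((γ.mulVec (fun _ => 1) - μ) ⬝ᵥ G₁.mulVec (γ.mulVec (fun _ => 1) - μ)
          + (γ.transpose.mulVec (fun _ => 1) - ν) ⬝ᵥ
              G₂.mulVec (γ.transpose.mulVec (fun _ => 1) - ν))
    ≥ α ⬝ᵥ μ + β ⬝ᵥ ν - 1 / (4 * lam₁) * (α ⬝ᵥ G₁⁻¹.mulVec α)
      - 1 / (4 * lam₁) * (β ⬝ᵥ G₂⁻¹.mulVec β)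
      - ∑ j, ThetaStar m K lam₂ (fun i => α i + β j - C i j) := by
  set r : Fin m → ℝ := γ.mulVec (fun _ => 1) - μ with hr
  set s : Fin n → ℝ := γ.transpose.mulVec (fun _ => 1) - ν with hs
  -- quadratic bounds
  have hA := quad_bound hG₁ hlam₁ (-r) α
  have hB := quad_bound hG₂ hlam₁ (-s) β
  simp only [mulVec_neg, dotProduct_neg, neg_dotProduct, neg_neg] at hA hB
  -- conjugate bounds
  have hT : ∑ j, ((∑ i, (α i + β j - C i j) * γ i j) - lam₂ / 2 * ∑ i, (γ i j) ^ 2)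
      ≤ ∑ j, ThetaStar m K lam₂ (fun i => α i + β j - C i j) :=
    Finset.sum_le_sum fun j _ =>
      theta_lb m K hlam₂ _ (fun i => γ i j) (fun i => hγpos i j) (hγsparse j)
  -- rewrite dot products as sums
  have hαr : α ⬝ᵥ r = (∑ j, ∑ i, α i * γ i j) - α ⬝ᵥ μ := by
    rw [hr, dotProduct_sub]
    congr 1
    simp only [dotProduct, mulVec, Finset.mul_sum]
    rw [Finset.sum_comm]
    simp [dotProduct]
  have hβs : β ⬝ᵥ s = (∑ j, ∑ i, β j * γ i j) - β ⬝ᵥ ν := by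
    rw [hs, dotProduct_sub]
    congr 1
    simp [dotProduct, mulVec, transpose_apply, Finset.mul_sum]
  have hj : ∀ j, (∑ i, (α i + β j - C i j) * γ i j)
      = (∑ i, α i * γ i j) + (∑ i, β j * γ i j) - (∑ i, C i j * γ i j) := fun j => by
    rw [← Finset.sum_add_distrib, ← Finset.sum_sub_distrib]
    exact Finset.sum_congr rfl fun i _ => by ring
  simp only [hj] at hT
  have hE : ∑ j, ((∑ i, α i * γ i j) + (∑ i, β j * γ i j) - (∑ i, C i j * γ i j)
        - lam₂ / 2 * ∑ i, (γ i j) ^ 2)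
      = (∑ j, ∑ i, α i * γ i j) + (∑ j, ∑ i, β j * γ i j)
        - (∑ i, ∑ j, C i j * γ i j) - (∑ j, lam₂ / 2 * ∑ i, (γ i j) ^ 2) := by
    have hswap : (∑ i, ∑ j, C i j * γ i j) = ∑ j, ∑ i, C i j * γ i j := Finset.sum_comm
    rw [hswap, Finset.sum_sub_distrib, Finset.sum_sub_distrib, Finset.sum_add_distrib]
  rw [hαr] at hA
  rw [hβs] at hB
  rw [hE] at hT
  have hq1 : 0 ≤ r ⬝ᵥ G₁.mulVec r := by simpa using hG₁.posSemidef.dotProduct_mulVec_nonneg r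
  have hq2 : 0 ≤ s ⬝ᵥ G₂.mulVec s := by simpa using hG₂.posSemidef.dotProduct_mulVec_nonneg s
  nlinarith [hA, hB, hT]
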